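/- Router minimizer and its sign: assume conditions (P1) and (P2). Then for every A > 0 and B > 0, the function t ↦ A·Ψ₁(t) + B·Ψ₂(t) has a unique global minimizer t*(A, B) ∈ ℝ, and this minimizer satisfies: t*(A, B) > 0 if A > B, t*(A, B) = 0 if A = B, and t*(A, B) < 0 if A < B. In particular, under the decoding rule r = 1 + 1{t ≥ 0}, the router selects the expert with the smaller profiled summary. -/

import Mathlib

/-- **Router minimizer and its sign.**
Under (P1) and (P2), for all `A, B > 0` the function `t ↦ A·Ψ₁(t) + B·Ψ₂(t)` has a unique
global minimizer `t*`, and `t* > 0` if `A > B`, `t* = 0` if `A = B`, `t* < 0` if `A < B`.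
Under the decoding rule `r = 1 + 1{t ≥ 0}`, the router thus selects the expert with the
smaller profiled summary. -/
theorem router_minimizer_sign
    -- (P1)
    (Ψ₁ Ψ₂ Ψ₁' Ψ₂' Ψ₁'' Ψ₂'' : ℝ → ℝ)
    (hΨ₁d : ∀ t, HasDerivAt Ψ₁ (Ψ₁' t) t) (hΨ₁d2 : ∀ t, HasDerivAt Ψ₁' (Ψ₁'' t) t)
    (hΨ₂d : ∀ t, HasDerivAt Ψ₂ (Ψ₂' t) t) (hΨ₂d2 : ∀ t, HasDerivAt Ψ₂' (Ψ₂'' t) t)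
    (hΨ₁''cont : Continuous Ψ₁'') (hΨ₂''cont : Continuous Ψ₂'')
    (hΨ₁pos : ∀ t, 0 < Ψ₁ t) (hΨ₂pos : ∀ t, 0 < Ψ₂ t)
    (hΨ₁'neg : ∀ t, Ψ₁' t < 0) (hΨ₂'pos : ∀ t, 0 < Ψ₂' t)
    (hΨ₁''pos : ∀ t, 0 < Ψ₁'' t) (hΨ₂''pos : ∀ t, 0 < Ψ₂'' t)
    -- (P2)
    (hρanti : StrictAnti (fun t => -Ψ₁' t / Ψ₂' t))
    (hρrange : Set.range (fun t => -Ψ₁' t / Ψ₂' t) = Set.Ioi (0 : ℝ))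
    (hρ0 : -Ψ₁' 0 / Ψ₂' 0 = 1) :
    ∀ A B : ℝ, 0 < A → 0 < B →
      ∃ t : ℝ,
        (∀ s : ℝ, A * Ψ₁ t + B * Ψ₂ t ≤ A * Ψ₁ s + B * Ψ₂ s) ∧
        (∀ t' : ℝ, (∀ s : ℝ, A * Ψ₁ t' + B * Ψ₂ t' ≤ A * Ψ₁ s + B * Ψ₂ s) → t' = t) ∧
        (B < A → 0 < t) ∧ (A = B → t = 0) ∧ (A < B → t < 0) := by
  intro A B hA hB
  set ρ := fun t => -Ψ₁' t / Ψ₂' t with hρ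
  -- obtain t with ρ t = B / A
  have hBA : (B / A) ∈ Set.Ioi (0 : ℝ) := by
    exact Set.mem_Ioi.mpr (div_pos hB hA)
  rw [← hρrange] at hBA
  obtain ⟨t, ht⟩ := hBA
  set f := fun s => A * Ψ₁ s + B * Ψ₂ s with hf
  have hfd : ∀ s, HasDerivAt f (A * Ψ₁' s + B * Ψ₂' s) s := fun s =>
    ((hΨ₁d s).const_mul A).add ((hΨ₂d s).const_mul B)
  have hfderiv : ∀ s, deriv f s = A * Ψ₁' s + B * Ψ₂' s := fun s => (hfd s).deriv
  have hfc : Continuous f := by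
    have : Differentiable ℝ f := fun s => (hfd s).differentiableAt
    exact this.continuous
  -- derivative sign
  have hderiv_neg : ∀ s, s < t → A * Ψ₁' s + B * Ψ₂' s < 0 := by
    intro s hs
    have h1 : B / A < ρ s := ht ▸ hρanti hs
    have h2 : B * Ψ₂' s < A * (-Ψ₁' s) := by
      rw [div_lt_div_iff₀ hA (hΨ₂'pos s)] at h1
      linarith [h1]
    linarith
  have hderiv_pos : ∀ s, t < s → 0 < A * Ψ₁' s + B * Ψ₂' s := by
    intro s hs
    have h1 : ρ s < B / A := ht ▸ hρanti hs
    have h2 : A * (-Ψ₁' s) < B * Ψ₂' s := by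
      rw [div_lt_div_iff₀ (hΨ₂'pos s) hA] at h1
      linarith [h1]
    linarith
  have hmono : StrictMonoOn f (Set.Ici t) := by
    apply strictMonoOn_of_deriv_pos (convex_Ici t) hfc.continuousOn
    intro x hx
    rw [interior_Ici] at hx
    rw [hfderiv]
    exact hderiv_pos x hx
  have hanti : StrictAntiOn f (Set.Iic t) := by
    apply strictAntiOn_of_deriv_neg (convex_Iic t) hfc.continuousOn
    intro x hx
    rw [interior_Iic] at hx
    rw [hfderiv]
    exact hderiv_neg x hx
  have hmin : ∀ s, s ≠ t → f t < f s := by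
    intro s hs
    rcases lt_or_gt_of_ne hs with h | h
    · exact hanti (le_of_lt h) (le_refl t) h
    · exact hmono (le_refl t) (le_of_lt h) h
  refine ⟨t, ?_, ?_, ?_, ?_, ?_⟩
  · intro s
    rcases eq_or_ne s t with rfl | hs
    · exact le_refl _
    · exact le_of_lt (hmin s hs)
  · intro t' ht'
    by_contra h
    have h1 := hmin t' h
    have h2 := ht' t
    simp only [hf] at h1
    linarith
  · intro hAB
    have h1 : ρ t < ρ 0 := by
      rw [ht, show ρ 0 = 1 from hρ0]
      exact (div_lt_one hA).mpr hAB
    exact hρanti.lt_iff_gt.mp h1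
  · intro hAB
    have h1 : ρ t = ρ 0 := by
      rw [ht, show ρ 0 = 1 from hρ0, hAB]
      exact div_self (ne_of_gt hB)
    exact hρanti.injective h1
  · intro hAB
    have h1 : ρ 0 < ρ t := by
      rw [ht, show ρ 0 = 1 from hρ0]
      exact (one_lt_div hA).mpr hAB
    exact hρanti.lt_iff_gt.mp h1
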